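/- arXiv:2201.01339 — 2 statements merged into one kernel-verified Lean document; each statement's English description precedes it below -/
import Mathlib

section
/- Let ℓ ≥ 1 and for each i = 1, …, ℓ let U^(i), V^(i) be GF(q)-subspaces of GF(q)^(N_i). Suppose for each i there exist subspaces W^(i) ⊆ (U^(i))^⊥ and E^(i) ⊆ GF(q)^(N_i) with W^(i) ∩ E^(i) = 0, E^(i) ∩ (U^(i))^⊥ = 0 and V^(i) = W^(i) + E^(i), and set δ := Σ_i (dim (U^(i))^⊥ − dim W^(i)) and γ := Σ_i dim E^(i). Then for each i there exist subspaces W'^(i) ⊆ U^(i) and E'^(i) ⊆ GF(q)^(N_i) with W'^(i) ∩ E'^(i) = 0, E'^(i) ∩ U^(i) = 0 and (V^(i))^⊥ = W'^(i) + E'^(i), such that Σ_i (dim U^(i) − dim W'^(i)) = γ and Σ_i dim E'^(i) = δ. -/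
namespace Stmt18

/-- Orthogonal complement of a subspace of `GF(q)^N` w.r.t. the standard dot product. -/
def perp {K : Type} [Field K] {N : ℕ} (U : Submodule K (Fin N → K)) :
    Submodule K (Fin N → K) where
  carrier := {x | ∀ u ∈ U, ∑ j, x j * u j = 0}
  add_mem' := by
    intro x y hx hy u hu
    simp only [Set.mem_setOf_eq] at hx hy ⊢
    have h1 := hx u hu
    have h2 := hy u hu
    simp [Pi.add_apply, add_mul, Finset.sum_add_distrib, h1, h2]
  zero_mem' := by
    intro u _
    simp
  smul_mem' := by
    intro c x hx u hu
    simp only [Set.mem_setOf_eq] at hx ⊢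
    have h := hx u hu
    calc ∑ j, (c • x) j * u j = c * ∑ j, x j * u j := by
          simp [Finset.mul_sum, mul_assoc]
      _ = 0 := by rw [h, mul_zero]

variable {K : Type} [Field K] {N : ℕ}

/-- The standard dot-product bilinear form on `Fin N → K`. -/
def dotForm (K : Type) [Field K] (N : ℕ) : LinearMap.BilinForm K (Fin N → K) :=
  LinearMap.mk₂ K (fun x y => ∑ j, x j * y j)
    (by intro x x' y; simp [add_mul, Finset.sum_add_distrib])
    (by intro c x y; simp [Finset.mul_sum, mul_assoc])
    (by intro x y y'; simp [mul_add, Finset.sum_add_distrib])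
    (by intro c x y; simp [Finset.mul_sum]; ring_nf; simp [mul_assoc, mul_comm, mul_left_comm])

lemma dotForm_apply (x y : Fin N → K) : dotForm K N x y = ∑ j, x j * y j := rfl

lemma dotForm_comm (x y : Fin N → K) : dotForm K N x y = dotForm K N y x := by
  simp [dotForm_apply, mul_comm]

lemma dotForm_refl : (dotForm K N).IsRefl := by
  intro x y h; rwa [dotForm_comm]

lemma dotForm_nondeg : (dotForm K N).Nondegenerate := by
  have hL : ∀ x : Fin N → K, (∀ y, dotForm K N x y = 0) → x = 0 := by
    intro x h
    ext j
    have := h (Pi.single j 1)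
    simpa [dotForm_apply, Pi.single_apply, Finset.sum_ite_eq'] using this
  exact ⟨hL, fun y h => hL y (fun x => by rw [dotForm_comm]; exact h x)⟩

lemma perp_eq_orthogonal (U : Submodule K (Fin N → K)) :
    perp U = (dotForm K N).orthogonal U := by
  ext x
  simp only [LinearMap.BilinForm.mem_orthogonal_iff]
  constructor
  · intro hx u hu
    have := hx u hu
    rw [dotForm_comm]
    exact this
  · intro hx u hu
    have := hx u hu
    rw [dotForm_comm] at this
    exact this

lemma finrank_perp_add (U : Submodule K (Fin N → K)) :
    Module.finrank K ↥(perp U) + Module.finrank K ↥U = N := by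
  rw [perp_eq_orthogonal]
  have h := LinearMap.BilinForm.finrank_add_finrank_orthogonal (B := dotForm K N) dotForm_refl U
  rw [LinearMap.BilinForm.orthogonal_top_eq_bot dotForm_nondeg, inf_bot_eq, finrank_bot,
    add_zero, Module.finrank_fin_fun] at h
  omega

lemma perp_perp (U : Submodule K (Fin N → K)) : perp (perp U) = U := by
  rw [perp_eq_orthogonal, perp_eq_orthogonal]
  exact LinearMap.BilinForm.orthogonal_orthogonal dotForm_nondeg dotForm_refl U

lemma le_perp_iff (U V : Submodule K (Fin N → K)) :
    U ≤ perp V ↔ ∀ u ∈ U, ∀ v ∈ V, ∑ j, u j * v j = 0 := Iff.rfl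

lemma perp_sup (U V : Submodule K (Fin N → K)) :
    perp (U ⊔ V) = perp U ⊓ perp V := by
  apply le_antisymm
  · refine le_inf ?_ ?_ <;> intro x hx u hu <;> exact hx u (by
      first
        | exact Submodule.mem_sup_left hu
        | exact Submodule.mem_sup_right hu)
  · intro x hx u hu
    obtain ⟨a, ha, b, hb, rfl⟩ := Submodule.mem_sup.mp hu
    have h1 := hx.1 a ha
    have h2 := hx.2 b hb
    simp [Pi.add_apply, mul_add, Finset.sum_add_distrib, h1, h2]

lemma perp_eq_bot_imp_top (U : Submodule K (Fin N → K)) (h : perp U = ⊥) : U = ⊤ := by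
  have h1 := finrank_perp_add U
  rw [h, finrank_bot, zero_add] at h1
  apply Submodule.eq_top_of_finrank_eq
  rw [h1, Module.finrank_fin_fun]

/-- The per-coordinate key lemma. -/
lemma key (U V W E : Submodule K (Fin N → K))
    (hWU : W ≤ perp U) (hWE : W ⊓ E = ⊥) (hEU : E ⊓ perp U = ⊥) (hV : V = W ⊔ E) :
    ∃ W' E' : Submodule K (Fin N → K),
      W' ≤ U ∧ W' ⊓ E' = ⊥ ∧ E' ⊓ U = ⊥ ∧ perp V = W' ⊔ E' ∧
      Module.finrank K ↥W' + Module.finrank K ↥E = Module.finrank K ↥U ∧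
      Module.finrank K ↥E' + Module.finrank K ↥W = Module.finrank K ↥(perp U) := by
  classical
  set W' : Submodule K (Fin N → K) := U ⊓ perp V with hW'
  obtain ⟨q, hq⟩ := Submodule.exists_isCompl (W'.comap (perp V).subtype)
  set E' : Submodule K (Fin N → K) := q.map (perp V).subtype with hE'
  have hW'le : W' ≤ perp V := inf_le_right
  have hE'le : E' ≤ perp V := by
    rw [hE']; rintro x ⟨y, hy, rfl⟩; exact y.2
  have hmapW' : (W'.comap (perp V).subtype).map (perp V).subtype = W' := by
    rw [Submodule.map_comap_subtype, inf_eq_right.mpr hW'le]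
  have hsup : perp V = W' ⊔ E' := by
    have := congrArg (Submodule.map (perp V).subtype) hq.sup_eq_top
    rw [Submodule.map_sup, hmapW', Submodule.map_top, Submodule.range_subtype] at this
    exact this.symm
  have hinf : W' ⊓ E' = ⊥ := by
    have := congrArg (Submodule.map (perp V).subtype) hq.inf_eq_bot
    rw [Submodule.map_inf _ (Submodule.injective_subtype _), hmapW', Submodule.map_bot] at this
    exact this
  refine ⟨W', E', inf_le_left, hinf, ?_, hsup, ?_, ?_⟩
  · -- E' ⊓ U = ⊥
    rw [← le_bot_iff, ← hinf]
    intro x hx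
    exact ⟨⟨hx.2, hE'le hx.1⟩, hx.1⟩
  · -- finrank W' + finrank E = finrank U
    have hUperpW : U ≤ perp W := by
      intro u hu w hw
      have := hWU hw u hu
      rw [← this]
      exact Finset.sum_congr rfl (fun j _ => mul_comm _ _)
    have hW'eq : W' = U ⊓ perp E := by
      rw [hW', hV, perp_sup, ← inf_assoc, inf_eq_left.mpr hUperpW]
    have htop : U ⊔ perp E = ⊤ := by
      apply perp_eq_bot_imp_top
      have : perp (U ⊔ perp E) = perp U ⊓ E := by
        rw [perp_sup, perp_perp]
      rw [this, inf_comm]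
      exact hEU
    have h1 := Submodule.finrank_sup_add_finrank_inf_eq U (perp E)
    rw [htop, ← hW'eq] at h1
    have h2 := finrank_perp_add E
    have h3 : Module.finrank K (⊤ : Submodule K (Fin N → K)) = N := by
      rw [finrank_top, Module.finrank_fin_fun]
    omega
  · -- finrank E' + finrank W = finrank (perp U)
    have hdim : Module.finrank K ↥W' + Module.finrank K ↥E' = Module.finrank K ↥(perp V) := by
      have h := Submodule.finrank_sup_add_finrank_inf_eq W' E'
      rw [← hsup, hinf, finrank_bot, add_zero] at h
      exact h.symm
    have hV' : Module.finrank K ↥V = Module.finrank K ↥W + Module.finrank K ↥E := by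
      have h := Submodule.finrank_sup_add_finrank_inf_eq W E
      rw [hWE, finrank_bot, add_zero] at h
      rw [hV, h]
    have h2 := finrank_perp_add V
    have h3 := finrank_perp_add U
    have hUperpW : U ≤ perp W := by
      intro u hu w hw
      have := hWU hw u hu
      rw [← this]
      exact Finset.sum_congr rfl (fun j _ => mul_comm _ _)
    have hW'eq : W' = U ⊓ perp E := by
      rw [hW', hV, perp_sup, ← inf_assoc, inf_eq_left.mpr hUperpW]
    have htop : U ⊔ perp E = ⊤ := by
      apply perp_eq_bot_imp_top
      rw [perp_sup, perp_perp, inf_comm]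
      exact hEU
    have h1 := Submodule.finrank_sup_add_finrank_inf_eq U (perp E)
    rw [htop, ← hW'eq] at h1
    have h4 := finrank_perp_add E
    have h5 : Module.finrank K (⊤ : Submodule K (Fin N → K)) = N := by
      rw [finrank_top, Module.finrank_fin_fun]
    omega

/-- Duality of insertions and deletions.
If for each `i` the subspace `V^(i)` decomposes as `W^(i) ⊕ E^(i)` with
`W^(i) ⊆ (U^(i))^⊥` and `E^(i) ∩ (U^(i))^⊥ = 0`, with `δ = Σ(dim (U^(i))^⊥ − dim W^(i))`
and `γ = Σ dim E^(i)`, then the dual tuple `(V^(i))^⊥` admits an analogous decomposition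
w.r.t. `U` with the roles of `γ` and `δ` interchanged. -/
theorem dual_reachability
    {K : Type} [Field K] [Fintype K]
    {ℓ : ℕ} (hℓ : 1 ≤ ℓ) (N : Fin ℓ → ℕ)
    (U V W E : (i : Fin ℓ) → Submodule K (Fin (N i) → K))
    (hWU : ∀ i, W i ≤ perp (U i))
    (hWE : ∀ i, W i ⊓ E i = ⊥)
    (hEU : ∀ i, E i ⊓ perp (U i) = ⊥)
    (hV : ∀ i, V i = W i ⊔ E i)
    (γ δ : ℕ)
    (hδ : δ = ∑ i, (Module.finrank K ↥(perp (U i)) - Module.finrank K ↥(W i)))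
    (hγ : γ = ∑ i, Module.finrank K ↥(E i)) :
    ∃ W' E' : (i : Fin ℓ) → Submodule K (Fin (N i) → K),
      (∀ i, W' i ≤ U i) ∧
      (∀ i, W' i ⊓ E' i = ⊥) ∧
      (∀ i, E' i ⊓ U i = ⊥) ∧
      (∀ i, perp (V i) = W' i ⊔ E' i) ∧
      (∑ i, (Module.finrank K ↥(U i) - Module.finrank K ↥(W' i))) = γ ∧
      (∑ i, Module.finrank K ↥(E' i)) = δ := by
  choose W' E' h1 h2 h3 h4 h5 h6 using fun i => key (U i) (V i) (W i) (E i)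
    (hWU i) (hWE i) (hEU i) (hV i)
  refine ⟨W', E', h1, h2, h3, h4, ?_, ?_⟩
  · rw [hγ]
    exact Finset.sum_congr rfl (fun i _ => by have := h5 i; omega)
  · rw [hδ]
    exact Finset.sum_congr rfl (fun i _ => by
      have := h6 i
      have : Module.finrank K ↥(W i) ≤ Module.finrank K ↥(perp (U i)) := by omega
      omega)

end Stmt18
end

section
/- In the Loidreau–Overbeck setting, assume rk_F(λ_(n−t−k)(E)_a⃗) = t, let h = (h^(1) | ⋯ | h^(ℓ)) ∈ F^n be a nonzero vector with L·hᵀ = 0, let T^(i) ∈ GF(q)^(n_i×n_i) be invertible matrices such that the first t_i entries of h^(i)·T^(i) are zero, and set D^(i) := ((T^(i))^(−1))ᵀ, β̃^(i) := β^(i)·D^(i) and R̃^(i) := R^(i)·D^(i). Then for every row index j = 1, …, s, every block i = 1, …, ℓ and every position μ = t_i + 1, …, n_i, the (j, μ)-entry of R̃^(i) equals Σ_(u=0)^(k−1) M_(j,u)·D_(a_i)^u(β̃^(i)_μ); moreover, the j-th row of M is the unique vector v ∈ F^k satisfying Σ_(u=0)^(k−1) v_u·D_(a_i)^u(β̃^(i)_μ)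 = R̃^(i)_(j,μ) for all such i and μ, so each message polynomial can be uniquely reconstructed from the received word by interpolation. -/
namespace Stmt19

/-- `genNorm σ a i = σ^(i-1)(a) ⋯ σ(a) · a`, the generalized power function `N_i(a)`. -/
def genNorm {F : Type} [Field F] (σ : F ≃+* F) (a : F) : ℕ → F
  | 0 => 1
  | i + 1 => (⇑σ)^[i] a * genNorm σ a i

/-- Generalized operator `D_a^i(b) = σ^i(b) · N_i(a)` for `i ∈ ℕ`. -/
def opev {F : Type} [Field F] (σ : F ≃+* F) (a b : F) (i : ℕ) : F :=
  (⇑σ)^[i] b * genNorm σ a i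

/-- `b` is σ-conjugate to `a`, i.e. `b = σ(c)·a·c⁻¹` for some nonzero `c`. -/
def SConj {F : Type} [Field F] (σ : F ≃+* F) (a b : F) : Prop :=
  ∃ c : F, c ≠ 0 ∧ b = σ c * a * c⁻¹

/-- σ-generalized Moore matrix `λ_d(x)_a⃗` w.r.t. the length partition `nn`:
its row `r` applies `D_{a_i}^r` entrywise to the `i`-th block of `x`. -/
def moore {F : Type} [Field F] (σ : F ≃+* F) {ℓ : ℕ} (nn : Fin ℓ → ℕ) (aa : Fin ℓ → F)
    (d : ℕ) (x : (Σ i : Fin ℓ, Fin (nn i)) → F) :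
    Matrix (Fin d) (Σ i : Fin ℓ, Fin (nn i)) F :=
  Matrix.of fun r p => opev σ (aa p.1) (x p) (r : ℕ)

/-- `λ_d(X)_a⃗` for a matrix `X`: the stack of `λ_d(x_j)_a⃗` over the rows of `X`. -/
def mooreMat {F : Type} [Field F] (σ : F ≃+* F) {ℓ : ℕ} (nn : Fin ℓ → ℕ) (aa : Fin ℓ → F)
    {s : ℕ} (d : ℕ) (X : Matrix (Fin s) (Σ i : Fin ℓ, Fin (nn i)) F) :
    Matrix (Fin s × Fin d) (Σ i : Fin ℓ, Fin (nn i)) F :=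
  Matrix.of fun r p => opev σ (aa p.1) (X r.1 p) (r.2 : ℕ)

/-- `rk_q` of a vector: the `K`-dimension of the `K`-span of its entries. -/
noncomputable def rkq (K : Type) [Field K] {F : Type} [Field F] [Algebra K F] {ι : Type}
    (v : ι → F) : ℕ :=
  Module.finrank K (Submodule.span K (Set.range v))

/-- `rk_q` of a matrix: the `K`-dimension of the `K`-span of its columns. -/
noncomputable def rkqMat (K : Type) [Field K] {F : Type} [Field F] [Algebra K F]
    {s : ℕ} {ι : Type} (X : Matrix (Fin s) ι F) : ℕ :=
  Module.finrank K (Submodule.span K (Set.range fun j : ι => fun r : Fin s => X r j))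

/-- Sum-rank weight of a blockwise vector. -/
noncomputable def wtV (K : Type) [Field K] {F : Type} [Field F] [Algebra K F] {ℓ : ℕ}
    (nn : Fin ℓ → ℕ) (x : (Σ i : Fin ℓ, Fin (nn i)) → F) : ℕ :=
  ∑ i, rkq K fun μ : Fin (nn i) => x ⟨i, μ⟩

/-- Sum-rank weight of a blockwise matrix. -/
noncomputable def wtM (K : Type) [Field K] {F : Type} [Field F] [Algebra K F] {s ℓ : ℕ}
    (nn : Fin ℓ → ℕ) (X : Matrix (Fin s) (Σ i : Fin ℓ, Fin (nn i)) F) : ℕ :=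
  ∑ i, rkqMat K (Matrix.of fun (r : Fin s) (μ : Fin (nn i)) => X r ⟨i, μ⟩)

/-- Codeword `C(M) = M · λ_k(β)_a⃗` of the `s`-interleaved linearized Reed–Solomon code. -/
def codeword {F : Type} [Field F] (σ : F ≃+* F) {ℓ : ℕ} (nn : Fin ℓ → ℕ) (aa : Fin ℓ → F)
    (β : (Σ i : Fin ℓ, Fin (nn i)) → F) {s : ℕ} (k : ℕ) (M : Matrix (Fin s) (Fin k) F) :
    Matrix (Fin s) (Σ i : Fin ℓ, Fin (nn i)) F :=
  M * moore σ nn aa k β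

/-- Loidreau–Overbeck decoding matrix: the stack of `λ_{n-t-1}(β)_a⃗` and
`λ_{n-t-k}(r_j)_a⃗` for the rows `r_j` of `R`. -/
def LOmat {F : Type} [Field F] (σ : F ≃+* F) {ℓ : ℕ} (nn : Fin ℓ → ℕ) (aa : Fin ℓ → F)
    (β : (Σ i : Fin ℓ, Fin (nn i)) → F) {s : ℕ}
    (R : Matrix (Fin s) (Σ i : Fin ℓ, Fin (nn i)) F) (n t k : ℕ) :
    Matrix (Fin (n - t - 1) ⊕ Fin s × Fin (n - t - k)) (Σ i : Fin ℓ, Fin (nn i)) F :=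
  Matrix.of fun r p =>
    match r with
    | Sum.inl u => opev σ (aa p.1) (β p) (u : ℕ)
    | Sum.inr ju => opev σ (aa p.1) (R ju.1 p) (ju.2 : ℕ)

section Aux1

variable {K F : Type} [Field K] [Field F] [Algebra K F]

lemma sigma_fix (σ : F ≃+* F) (hfix : ∀ x : F, σ x = x ↔ x ∈ Set.range (algebraMap K F))
    (c : K) : σ (algebraMap K F c) = algebraMap K F c := (hfix _).mpr ⟨c, rfl⟩

lemma iter_map_mul (σ : F ≃+* F) (u : ℕ) (x y : F) :
    (⇑σ)^[u] (x * y) = (⇑σ)^[u] x * (⇑σ)^[u] y := by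
  induction u with
  | zero => rfl
  | succ n ih => simp [Function.iterate_succ_apply', ih, map_mul]

lemma iter_map_add (σ : F ≃+* F) (u : ℕ) (x y : F) :
    (⇑σ)^[u] (x + y) = (⇑σ)^[u] x + (⇑σ)^[u] y := by
  induction u with
  | zero => rfl
  | succ n ih => simp [Function.iterate_succ_apply', ih, map_add]

lemma iter_map_sub (σ : F ≃+* F) (u : ℕ) (x y : F) :
    (⇑σ)^[u] (x - y) = (⇑σ)^[u] x - (⇑σ)^[u] y := by
  induction u with
  | zero => rfl
  | succ n ih => simp [Function.iterate_succ_apply', ih, map_sub]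

lemma iter_map_zero (σ : F ≃+* F) (u : ℕ) : (⇑σ)^[u] (0 : F) = 0 := by
  induction u with
  | zero => rfl
  | succ n ih => simp [Function.iterate_succ_apply', ih]

lemma iter_map_sum (σ : F ≃+* F) (u : ℕ) {ι : Type} (s : Finset ι) (f : ι → F) :
    (⇑σ)^[u] (∑ x ∈ s, f x) = ∑ x ∈ s, (⇑σ)^[u] (f x) := by
  induction u with
  | zero => rfl
  | succ n ih =>
    rw [Function.iterate_succ_apply', ih, map_sum]
    exact Finset.sum_congr rfl fun x _ => (Function.iterate_succ_apply' (⇑σ) n (f x)).symm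

lemma iter_fix (σ : F ≃+* F) (hfix : ∀ x : F, σ x = x ↔ x ∈ Set.range (algebraMap K F))
    (c : K) (u : ℕ) : (⇑σ)^[u] (algebraMap K F c) = algebraMap K F c := by
  induction u with
  | zero => rfl
  | succ n ih => rw [Function.iterate_succ_apply', ih, sigma_fix σ hfix]


lemma opev_zero_exp (σ : F ≃+* F) (a b : F) : opev σ a b 0 = b := by
  simp [opev, genNorm]

lemma opev_one_exp (σ : F ≃+* F) (a b : F) : opev σ a b 1 = σ b * a := by
  simp [opev, genNorm]

lemma opev_zero_right (σ : F ≃+* F) (a : F) (u : ℕ) : opev σ a 0 u = 0 := by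
  simp [opev, iter_map_zero]

lemma opev_add (σ : F ≃+* F) (a x y : F) (u : ℕ) :
    opev σ a (x + y) u = opev σ a x u + opev σ a y u := by
  simp [opev, iter_map_add, add_mul]

lemma opev_sub (σ : F ≃+* F) (a x y : F) (u : ℕ) :
    opev σ a (x - y) u = opev σ a x u - opev σ a y u := by
  simp [opev, iter_map_sub, sub_mul]

lemma opev_mul_left (σ : F ≃+* F) (a x y : F) (u : ℕ) :
    opev σ a (x * y) u = (⇑σ)^[u] x * opev σ a y u := by
  simp [opev, iter_map_mul, mul_assoc]

lemma opev_alg_mul (σ : F ≃+* F) (hfix : ∀ x : F, σ x = x ↔ x ∈ Set.range (algebraMap K F))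
    (a : F) (c : K) (y : F) (u : ℕ) :
    opev σ a (algebraMap K F c * y) u = algebraMap K F c * opev σ a y u := by
  rw [opev_mul_left, iter_fix σ hfix]

lemma opev_sum (σ : F ≃+* F) (a : F) {ι : Type} (s : Finset ι) (f : ι → F) (u : ℕ) :
    opev σ a (∑ x ∈ s, f x) u = ∑ x ∈ s, opev σ a (f x) u := by
  unfold opev
  rw [iter_map_sum, Finset.sum_mul]

lemma genNorm_add (σ : F ≃+* F) (a : F) (u v : ℕ) :
    genNorm σ a (u + v) = (⇑σ)^[u] (genNorm σ a v) * genNorm σ a u := by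
  induction v with
  | zero => simp [genNorm]
  | succ n ih =>
    have h1 : u + (n + 1) = (u + n) + 1 := by omega
    rw [h1]
    show (⇑σ)^[u + n] a * genNorm σ a (u + n) = _
    rw [ih]
    show _ = (⇑σ)^[u] ((⇑σ)^[n] a * genNorm σ a n) * genNorm σ a u
    rw [iter_map_mul, ← Function.iterate_add_apply, mul_assoc]

lemma opev_opev (σ : F ≃+* F) (a b : F) (u v : ℕ) :
    opev σ a (opev σ a b v) u = opev σ a b (u + v) := by
  unfold opev
  rw [iter_map_mul, ← Function.iterate_add_apply, genNorm_add, mul_assoc]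

/-- Truncated evaluation of an operator polynomial with coefficients `f` up to degree `Dd`. -/
def evp (σ : F ≃+* F) (f : ℕ → F) (Dd : ℕ) (a b : F) : F :=
  ∑ u ∈ Finset.range (Dd + 1), f u * opev σ a b u

lemma evp_zero_right (σ : F ≃+* F) (f : ℕ → F) (Dd : ℕ) (a : F) :
    evp σ f Dd a 0 = 0 := by
  simp [evp, opev_zero_right]

/-- The kernel of a truncated operator polynomial, as a `K`-submodule of `F`. -/
def evpKer (σ : F ≃+* F) (hfix : ∀ x : F, σ x = x ↔ x ∈ Set.range (algebraMap K F))
    (f : ℕ → F) (Dd : ℕ) (a : F) : Submodule K F where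
  carrier := {b | evp σ f Dd a b = 0}
  add_mem' := by
    intro x y hx hy
    simp only [Set.mem_setOf_eq, evp] at *
    have hsplit : ∑ u ∈ Finset.range (Dd + 1), f u * opev σ a (x + y) u
        = (∑ u ∈ Finset.range (Dd + 1), f u * opev σ a x u)
          + ∑ u ∈ Finset.range (Dd + 1), f u * opev σ a y u := by
      rw [← Finset.sum_add_distrib]
      exact Finset.sum_congr rfl fun u _ => by rw [opev_add]; ring
    rw [hsplit, hx, hy, add_zero]
  zero_mem' := by simp [Set.mem_setOf_eq, evp_zero_right]
  smul_mem' := by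
    intro c x hx
    simp only [Set.mem_setOf_eq, evp] at *
    rw [Algebra.smul_def]
    calc ∑ u ∈ Finset.range (Dd + 1), f u * opev σ a (algebraMap K F c * x) u
        = algebraMap K F c * ∑ u ∈ Finset.range (Dd + 1), f u * opev σ a x u := by
          rw [Finset.mul_sum]
          exact Finset.sum_congr rfl fun u _ => by rw [opev_alg_mul σ hfix]; ring
      _ = 0 := by rw [hx, mul_zero]

lemma mem_evpKer_iff (σ : F ≃+* F) (hfix : ∀ x : F, σ x = x ↔ x ∈ Set.range (algebraMap K F))
    (f : ℕ → F) (Dd : ℕ) (a b : F) :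
    b ∈ evpKer σ hfix f Dd a ↔ evp σ f Dd a b = 0 := Iff.rfl

/-- The `K`-linear map `b ↦ σ(b)·a − c·b`. -/
def gLin (σ : F ≃+* F) (hfix : ∀ x : F, σ x = x ↔ x ∈ Set.range (algebraMap K F))
    (a c : F) : F →ₗ[K] F where
  toFun b := σ b * a - c * b
  map_add' x y := by simp [map_add]; ring
  map_smul' r x := by
    simp only [Algebra.smul_def, RingHom.id_apply, map_mul, sigma_fix σ hfix]
    ring

lemma gLin_apply (σ : F ≃+* F) (hfix : ∀ x : F, σ x = x ↔ x ∈ Set.range (algebraMap K F))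
    (a c b : F) : gLin σ hfix a c b = σ b * a - c * b := rfl


end Aux1
section Aux2
variable {K F : Type} [Field K] [Field F] [Algebra K F]

lemma finrank_le_map_add_ker [FiniteDimensional K F] (g : F →ₗ[K] F) (W : Submodule K F) :
    Module.finrank K W ≤ Module.finrank K (W.map g) + Module.finrank K (LinearMap.ker g) := by
  have h1 := LinearMap.finrank_range_add_finrank_ker (g.domRestrict W)
  rw [LinearMap.range_domRestrict] at h1
  have h2 : Module.finrank K (LinearMap.ker (g.domRestrict W))
      ≤ Module.finrank K (LinearMap.ker g) := by
    have hmap : ∀ x : LinearMap.ker (g.domRestrict W), g ((x : W) : F) = 0 := by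
      intro x; exact x.2
    let φ : LinearMap.ker (g.domRestrict W) →ₗ[K] LinearMap.ker g :=
      LinearMap.codRestrict (LinearMap.ker g)
        (W.subtype.comp (LinearMap.ker (g.domRestrict W)).subtype)
        (fun x => by simpa using hmap x)
    apply LinearMap.finrank_le_finrank_of_injective (f := φ)
    intro x y hxy
    have h3 : ((x : W) : F) = ((y : W) : F) := by
      have h4 := congrArg Subtype.val hxy
      simpa [φ] using h4
    exact Subtype.ext (Subtype.ext h3)
  omega

theorem polyBound (σ : F ≃+* F) (hfix : ∀ x : F, σ x = x ↔ x ∈ Set.range (algebraMap K F))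
    [FiniteDimensional K F] {ℓ : ℕ} (aa : Fin ℓ → F) (ha0 : ∀ i, aa i ≠ 0)
    (haconj : ∀ i j : Fin ℓ, i ≠ j → ¬ Stmt19.SConj σ (aa i) (aa j)) :
    ∀ (Dd : ℕ) (f : ℕ → F), (∃ u, u ≤ Dd ∧ f u ≠ 0) → (∀ u, Dd < u → f u = 0) →
    ∀ W : Fin ℓ → Submodule K F, (∀ i, ∀ b ∈ W i, Stmt19.evp σ f Dd (aa i) b = 0) →
    (∑ i, Module.finrank K (W i)) ≤ Dd := by
  intro Dd
  induction Dd with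
  | zero =>
    intro f hne _ W hW
    obtain ⟨u, hu, hfu⟩ := hne
    interval_cases u
    have hbot : ∀ i, W i = ⊥ := by
      intro i
      rw [Submodule.eq_bot_iff]
      intro b hb
      have h5 := hW i b hb
      have h6 : Stmt19.evp σ f 0 (aa i) b = f 0 * b := by
        show (∑ u ∈ Finset.range (0 + 1), f u * Stmt19.opev σ (aa i) b u) = _
        rw [show (0:ℕ) + 1 = 1 from rfl, Finset.sum_range_one, Stmt19.opev_zero_exp]
      rw [h6] at h5
      rcases mul_eq_zero.mp h5 with h | h
      · exact absurd h hfu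
      · exact h
    have h7 : ∀ i, Module.finrank K (W i) = 0 := by
      intro i; rw [hbot i]; exact finrank_bot K F
    rw [Finset.sum_eq_zero fun i _ => h7 i]
  | succ Dd ih =>
    intro f hne hsupp W hW
    by_cases hroot : ∃ i0 : Fin ℓ, ∃ b0 ∈ W i0, b0 ≠ 0
    · obtain ⟨i0, b0, hb0W, hb00⟩ := hroot
      set c : F := σ b0 * aa i0 * b0⁻¹ with hc
      set h : ℕ → F := fun w => ∑ j ∈ Finset.range (Dd + 1 - w),
        f (w + 1 + j) * ∏ v ∈ Finset.range j, (⇑σ)^[w + 1 + v] c with hhdef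
      have hsupp' : ∀ w, Dd < w → h w = 0 := by
        intro w hw
        have : Dd + 1 - w = 0 := by omega
        simp [hhdef, this]
      have hrec : ∀ w, h w = f (w + 1) + h (w + 1) * (⇑σ)^[w + 1] c := by
        intro w
        by_cases hw : w ≤ Dd
        · have hsplit : Dd + 1 - w = (Dd - w) + 1 := by omega
          have hsplit2 : Dd + 1 - (w + 1) = Dd - w := by omega
          show (∑ j ∈ Finset.range (Dd + 1 - w),
            f (w + 1 + j) * ∏ v ∈ Finset.range j, (⇑σ)^[w + 1 + v] c) = _
          rw [hsplit, Finset.sum_range_succ']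
          have hterm : ∀ j : ℕ,
              f (w + 1 + (j + 1)) * ∏ v ∈ Finset.range (j + 1), (⇑σ)^[w + 1 + v] c
              = (f (w + 1 + 1 + j) * ∏ v ∈ Finset.range j, (⇑σ)^[w + 1 + 1 + v] c)
                * (⇑σ)^[w + 1] c := by
            intro j
            rw [Finset.prod_range_succ']
            have e1 : w + 1 + (j + 1) = w + 1 + 1 + j := by omega
            have e2 : ∀ v, w + 1 + (v + 1) = w + 1 + 1 + v := by intro v; omega
            have e3 : w + 1 + 0 = w + 1 := by omega
            rw [e1, e3]
            rw [Finset.prod_congr rfl fun v _ => by rw [e2 v]]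
            ring
          rw [Finset.sum_congr rfl fun j _ => hterm j]
          rw [← Finset.sum_mul]
          have hW1 : h (w + 1) = ∑ j ∈ Finset.range (Dd - w),
              f (w + 1 + 1 + j) * ∏ v ∈ Finset.range j, (⇑σ)^[w + 1 + 1 + v] c := by
            show (∑ j ∈ Finset.range (Dd + 1 - (w + 1)),
              f (w + 1 + 1 + j) * ∏ v ∈ Finset.range j, (⇑σ)^[w + 1 + 1 + v] c) = _
            rw [hsplit2]
          rw [← hW1]
          have hzero0 : f (w + 1 + 0) * ∏ v ∈ Finset.range 0, (⇑σ)^[w + 1 + v] c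
              = f (w + 1) := by simp
          rw [hzero0]
          ring
        · have h1 : h w = 0 := hsupp' w (by omega)
          have h2 : h (w + 1) = 0 := hsupp' (w + 1) (by omega)
          have h3 : f (w + 1) = 0 := hsupp (w + 1) (by omega)
          rw [h1, h2, h3]; ring
      have heval : ∀ a b : F, Stmt19.evp σ f (Dd + 1) a b
          = Stmt19.evp σ h Dd a (σ b * a - c * b) + (f 0 + h 0 * c) * b := by
        intro a b
        have hgb : σ b * a - c * b = Stmt19.opev σ a b 1 - c * b := by
          rw [Stmt19.opev_one_exp]
        have e1 : Stmt19.evp σ h Dd a (σ b * a - c * b)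
            = (∑ u ∈ Finset.range (Dd + 1), h u * Stmt19.opev σ a b (u + 1))
              - ∑ u ∈ Finset.range (Dd + 1), h u * ((⇑σ)^[u] c * Stmt19.opev σ a b u) := by
          rw [← Finset.sum_sub_distrib]
          unfold Stmt19.evp
          refine Finset.sum_congr rfl fun u _ => ?_
          rw [hgb, Stmt19.opev_sub]
          have : Stmt19.opev σ a (Stmt19.opev σ a b 1) u = Stmt19.opev σ a b (u + 1) :=
            Stmt19.opev_opev σ a b u 1
          rw [this, Stmt19.opev_mul_left]
          ring
        have e2 : Stmt19.evp σ f (Dd + 1) a b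
            = (∑ u ∈ Finset.range (Dd + 1), f (u + 1) * Stmt19.opev σ a b (u + 1)) + f 0 * b := by
          unfold Stmt19.evp
          rw [Finset.sum_range_succ' (fun u => f u * Stmt19.opev σ a b u) (Dd + 1)]
          rw [Stmt19.opev_zero_exp]
        have e3 : ∀ u : ℕ, f (u + 1) * Stmt19.opev σ a b (u + 1)
            = h u * Stmt19.opev σ a b (u + 1)
              - (h (u + 1) * (⇑σ)^[u + 1] c) * Stmt19.opev σ a b (u + 1) := by
          intro u
          have := hrec u
          have hf : f (u + 1) = h u - h (u + 1) * (⇑σ)^[u + 1] c := by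
            rw [this]; ring
          rw [hf]; ring
        rw [e2, e1]
        rw [Finset.sum_congr rfl fun u _ => e3 u]
        rw [Finset.sum_sub_distrib]
        have e4 : ∑ u ∈ Finset.range (Dd + 1),
            (h (u + 1) * (⇑σ)^[u + 1] c) * Stmt19.opev σ a b (u + 1)
            = (∑ u ∈ Finset.range (Dd + 1), h u * ((⇑σ)^[u] c * Stmt19.opev σ a b u))
              - h 0 * c * b := by
          have e5 := Finset.sum_range_succ'
            (fun u => h u * ((⇑σ)^[u] c * Stmt19.opev σ a b u)) (Dd + 1)
          have e6 : ∑ u ∈ Finset.range (Dd + 1 + 1),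
              h u * ((⇑σ)^[u] c * Stmt19.opev σ a b u)
              = ∑ u ∈ Finset.range (Dd + 1), h u * ((⇑σ)^[u] c * Stmt19.opev σ a b u) := by
            rw [Finset.sum_range_succ, hsupp' (Dd + 1) (by omega), zero_mul, add_zero]
          rw [e6] at e5
          have e7 : h 0 * ((⇑σ)^[0] c * Stmt19.opev σ a b 0) = h 0 * c * b := by
            rw [Stmt19.opev_zero_exp]; simp [mul_assoc]
          rw [e7] at e5
          have : ∑ u ∈ Finset.range (Dd + 1),
              (h (u + 1) * (⇑σ)^[u + 1] c) * Stmt19.opev σ a b (u + 1)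
              = ∑ u ∈ Finset.range (Dd + 1),
                h (u + 1) * ((⇑σ)^[u + 1] c * Stmt19.opev σ a b (u + 1)) := by
            exact Finset.sum_congr rfl fun u _ => by ring
          rw [this, eq_sub_iff_add_eq]
          exact e5.symm
        rw [e4]
        ring
      -- the root kills the constant term
      have hgb0 : σ b0 * aa i0 - c * b0 = 0 := by
        rw [hc]; field_simp; ring
      have hrho : f 0 + h 0 * c = 0 := by
        have h1 := heval (aa i0) b0
        rw [hW i0 b0 hb0W, hgb0, Stmt19.evp_zero_right] at h1
        have := h1.symm
        rw [zero_add] at this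
        exact (mul_eq_zero.mp this).resolve_right hb00
      -- h is not the zero polynomial
      have hne' : ∃ u, u ≤ Dd ∧ h u ≠ 0 := by
        by_contra hcon
        push_neg at hcon
        have hzero : ∀ u, h u = 0 := by
          intro u
          by_cases hu : u ≤ Dd
          · exact hcon u hu
          · exact hsupp' u (by omega)
        obtain ⟨u, hu, hfu⟩ := hne
        apply hfu
        match u with
        | 0 =>
          have := hrho
          rw [hzero 0, zero_mul, add_zero] at this
          exact this
        | u + 1 =>
          have h8 := hrec u
          rw [hzero u, hzero (u + 1), zero_mul, add_zero] at h8
          exact h8.symm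
      -- image submodules
      set W' : Fin ℓ → Submodule K F :=
        fun i => (W i).map (gLin σ hfix (aa i) c) with hW'def
      have hW' : ∀ i, ∀ b' ∈ W' i, Stmt19.evp σ h Dd (aa i) b' = 0 := by
        intro i b' hb'
        obtain ⟨b, hb, rfl⟩ := hb'
        have h1 := heval (aa i) b
        rw [hW i b hb, hrho, zero_mul, add_zero] at h1
        rw [gLin_apply]
        exact h1.symm
      have hIH := ih h hne' hsupp' W' hW'
      -- kernel dimension bounds
      have hkerbound : ∀ i : Fin ℓ,
          Module.finrank K (LinearMap.ker (gLin σ hfix (aa i) c))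
          ≤ if i = i0 then 1 else 0 := by
        intro i
        by_cases hi : i = i0
        · subst hi
          simp only [if_pos rfl]
          have hle : LinearMap.ker (gLin σ hfix (aa i) c) ≤ Submodule.span K {b0} := by
            intro b hb
            rcases eq_or_ne b 0 with rfl | hb0
            · exact zero_mem _
            have hgb : σ b * aa i - c * b = 0 := hb
            have hσb0 : σ b0 ≠ 0 := fun hz => hb00 (by
              have := congrArg σ.symm hz
              simpa using this)
            have h1' : σ b * aa i = c * b := by linear_combination hgb
            have h2' : σ b0 * aa i = c * b0 := by rw [hc]; field_simp
            have key : σ b * b0 = b * σ b0 := by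
              have h5 : (σ b * b0) * aa i = (b * σ b0) * aa i := by
                linear_combination b0 * h1' - b * h2'
              exact mul_right_cancel₀ (ha0 i) h5
            have hfixpt : σ (b * b0⁻¹) = b * b0⁻¹ := by
              rw [map_mul, map_inv₀]
              field_simp
              linear_combination key
            obtain ⟨κ, hκ⟩ := (hfix _).mp hfixpt
            have : b = κ • b0 := by
              rw [Algebra.smul_def, hκ]
              field_simp
            rw [this]
            exact Submodule.smul_mem _ _ (Submodule.mem_span_singleton_self b0)
          calc Module.finrank K (LinearMap.ker (gLin σ hfix (aa i) c))
              ≤ Module.finrank K (Submodule.span K {b0}) := Submodule.finrank_mono hle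
            _ = 1 := finrank_span_singleton hb00
        · simp only [if_neg hi]
          have hker : LinearMap.ker (gLin σ hfix (aa i) c) = ⊥ := by
            rw [LinearMap.ker_eq_bot']
            intro b hb
            by_contra hb0
            apply haconj i i0 hi
            refine ⟨b0⁻¹ * b, mul_ne_zero (inv_ne_zero hb00) hb0, ?_⟩
            have hgb : σ b * aa i - c * b = 0 := hb
            have hσb0 : σ b0 ≠ 0 := fun hz => hb00 (by
              have := congrArg σ.symm hz
              simpa using this)
            have h1 : σ b * aa i = c * b := by linear_combination hgb
            rw [map_mul, map_inv₀, mul_inv, inv_inv]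
            have h9 : (σ b0)⁻¹ * σ b * aa i * (b0 * b⁻¹)
                = (σ b0)⁻¹ * (σ b * aa i) * b⁻¹ * b0 := by ring
            rw [h9, h1, hc]
            field_simp
          rw [hker]
          simp
      have hstep : ∀ i : Fin ℓ, Module.finrank K (W i)
          ≤ Module.finrank K (W' i) + if i = i0 then 1 else 0 := by
        intro i
        have h1 := finrank_le_map_add_ker (gLin σ hfix (aa i) c) (W i)
        have h2 := hkerbound i
        have h3 : (W i).map (gLin σ hfix (aa i) c) = W' i := rfl
        rw [h3] at h1
        omega
      calc ∑ i, Module.finrank K (W i)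
          ≤ ∑ i, (Module.finrank K (W' i) + if i = i0 then 1 else 0) :=
            Finset.sum_le_sum fun i _ => hstep i
        _ = (∑ i, Module.finrank K (W' i)) + ∑ i, (if i = i0 then 1 else 0) :=
            Finset.sum_add_distrib
        _ = (∑ i, Module.finrank K (W' i)) + 1 := by
            rw [Finset.sum_ite_eq' Finset.univ i0 (fun _ => 1)]
            simp
        _ ≤ Dd + 1 := by omega
    · push_neg at hroot
      have hbot : ∀ i, W i = ⊥ := by
        intro i
        rw [Submodule.eq_bot_iff]
        exact fun b hb => hroot i b hb
      have h7 : ∀ i, Module.finrank K (W i) = 0 := by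
        intro i; rw [hbot i]; exact finrank_bot K F
      rw [Finset.sum_eq_zero fun i _ => h7 i]
      omega
end Aux2
section Aux3
variable {K F : Type} [Field K] [Field F] [Algebra K F]

/-- Any vector orthogonal to all rows of a tall generalized Moore matrix on blockwise
`K`-linearly independent points must vanish. -/
lemma mooreKer (σ : F ≃+* F) (hfix : ∀ x : F, σ x = x ↔ x ∈ Set.range (algebraMap K F))
    [FiniteDimensional K F] {ℓ : ℕ} (aa : Fin ℓ → F) (ha0 : ∀ i, aa i ≠ 0)
    (haconj : ∀ i j : Fin ℓ, i ≠ j → ¬ Stmt19.SConj σ (aa i) (aa j))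
    (dd : Fin ℓ → ℕ) (γ : (i : Fin ℓ) → Fin (dd i) → F)
    (hγ : ∀ i, LinearIndependent K (γ i))
    (Dr : ℕ) (hDr : (∑ i, dd i) ≤ Dr)
    (g : (Σ i : Fin ℓ, Fin (dd i)) → F)
    (hg : ∀ u : ℕ, u < Dr →
      (∑ p : Σ i : Fin ℓ, Fin (dd i), Stmt19.opev σ (aa p.1) (γ p.1 p.2) u * g p) = 0) :
    g = 0 := by
  classical
  set Ds := ∑ i, dd i with hDs
  rcases Nat.eq_zero_or_pos Ds with hDs0 | hDspos
  · funext p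
    have hle : dd p.1 ≤ Ds := Finset.single_le_sum (fun i _ => Nat.zero_le _)
      (Finset.mem_univ p.1)
    exact absurd p.2.isLt (by omega)
  · set rows : Fin Ds → ((Σ i : Fin ℓ, Fin (dd i)) → F) :=
      fun u p => Stmt19.opev σ (aa p.1) (γ p.1 p.2) (u : ℕ) with hrows
    have hD1 : Ds - 1 + 1 = Ds := by omega
    have hindep : LinearIndependent F rows := by
      rw [Fintype.linearIndependent_iff]
      intro cu hcu
      by_contra hcon
      push_neg at hcon
      obtain ⟨u0, hu0⟩ := hcon
      set f : ℕ → F := fun u => if hu : u < Ds then cu ⟨u, hu⟩ else 0 with hf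
      have hbound := polyBound σ hfix aa ha0 haconj (Ds - 1) f
        ⟨(u0 : ℕ), by omega, by simp only [hf]; rw [dif_pos u0.isLt]; simpa using hu0⟩
        (fun u hu => by simp only [hf]; rw [dif_neg (by omega)])
        (fun i => Submodule.span K (Set.range (γ i)))
        ?_
      · have hdim : ∀ i, Module.finrank K (Submodule.span K (Set.range (γ i))) = dd i := by
          intro i
          rw [finrank_span_eq_card (hγ i), Fintype.card_fin]
        rw [Finset.sum_congr rfl fun i _ => hdim i, ← hDs] at hbound
        omega
      · intro i b hb
        have hle : Submodule.span K (Set.range (γ i))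
            ≤ Stmt19.evpKer σ hfix f (Ds - 1) (aa i) := by
          rw [Submodule.span_le]
          rintro - ⟨w, rfl⟩
          rw [SetLike.mem_coe, Stmt19.mem_evpKer_iff]
          unfold Stmt19.evp
          rw [hD1, ← Fin.sum_univ_eq_sum_range
            (fun u => f u * Stmt19.opev σ (aa i) (γ i w) u) Ds]
          calc ∑ u : Fin Ds, f (u : ℕ) * Stmt19.opev σ (aa i) (γ i w) (u : ℕ)
              = ∑ u : Fin Ds, cu u * rows u ⟨i, w⟩ := by
                refine Finset.sum_congr rfl fun u _ => ?_
                simp only [hf]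
                rw [dif_pos u.isLt]
            _ = 0 := by
                have h2 := congrFun hcu ⟨i, w⟩
                simpa [Finset.sum_apply, Pi.smul_apply, smul_eq_mul] using h2
        exact hle hb
    have hcard : Fintype.card (Σ i : Fin ℓ, Fin (dd i)) = Ds := by
      simp [Fintype.card_sigma]
      exact hDs.symm
    haveI : Nonempty (Fin Ds) := ⟨⟨0, hDspos⟩⟩
    have hspan : Submodule.span F (Set.range rows) = ⊤ := by
      apply hindep.span_eq_top_of_card_eq_finrank
      simp [Module.finrank_pi, Fintype.card_sigma]
      exact hDs
    set Φ : ((Σ i : Fin ℓ, Fin (dd i)) → F) →ₗ[F] F := {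
      toFun := fun x => ∑ p, x p * g p
      map_add' := by intro x y; simp [add_mul, Finset.sum_add_distrib]
      map_smul' := by intro c x; simp [Finset.mul_sum, mul_assoc] } with hΦ
    have hΦrows : ∀ u : Fin Ds, Φ (rows u) = 0 := fun u => hg u (by omega)
    have hΦtop : ∀ x, x ∈ Submodule.span F (Set.range rows) → Φ x = 0 := by
      intro x hx
      induction hx using Submodule.span_induction with
      | mem x hmem =>
        obtain ⟨u, rfl⟩ := hmem
        exact hΦrows u
      | zero => simp
      | add x y _ _ hx hy => rw [map_add, hx, hy, add_zero]
      | smul a x _ hx => rw [map_smul, hx, smul_zero]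
    funext p
    have hone := hΦtop (Pi.single p 1) (by rw [hspan]; trivial)
    simp only [hΦ, LinearMap.coe_mk, AddHom.coe_mk] at hone
    rw [Finset.sum_eq_single p (fun q _ hq => by
      rw [Pi.single_eq_of_ne hq, zero_mul]) (by simp)] at hone
    rw [Pi.single_eq_same, one_mul] at hone
    exact hone
end Aux3
section Aux4
variable {K : Type} [Field K]

open Module in
/-- Decompose a finite family of vectors through a basis of its span. -/
lemma exists_decomp {V : Type} [AddCommGroup V] [Module K V] [FiniteDimensional K V]
    {ι : Type} [Fintype ι] (v : ι → V) :
    ∃ (B : Fin (finrank K (Submodule.span K (Set.range v))) → V)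
      (C : Fin (finrank K (Submodule.span K (Set.range v))) → ι → K),
      (∀ idx : ι, v idx = ∑ w, C w idx • B w) ∧
      LinearIndependent K B ∧
      (∀ lam : Fin (finrank K (Submodule.span K (Set.range v))) → K,
        (∀ idx, ∑ w, lam w * C w idx = 0) → lam = 0) := by
  classical
  set Vsp := Submodule.span K (Set.range v) with hVsp
  set bb := Module.finBasis K Vsp with hbb
  have hmem : ∀ idx, v idx ∈ Vsp := fun idx => Submodule.subset_span ⟨idx, rfl⟩
  refine ⟨fun w => (bb w : V), fun w idx => bb.repr ⟨v idx, hmem idx⟩ w, ?_, ?_, ?_⟩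
  · intro idx
    have h2 := congrArg (Subtype.val) (bb.sum_repr ⟨v idx, hmem idx⟩)
    have h3 : v idx = ((∑ x, bb.repr ⟨v idx, hmem idx⟩ x • bb x : Vsp) : V) := h2.symm
    rw [h3, Submodule.coe_sum]
    rfl
  · exact bb.linearIndependent.map' Vsp.subtype (Submodule.ker_subtype Vsp)
  · intro lam hlam
    set ψ : Vsp →ₗ[K] K := {
      toFun := fun x => ∑ w, lam w * bb.repr x w
      map_add' := by intro x y; simp [mul_add, Finset.sum_add_distrib]
      map_smul' := by
        intro c x
        simp only [map_smul, Finsupp.smul_apply, smul_eq_mul, RingHom.id_apply,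
          Finset.mul_sum]
        exact Finset.sum_congr rfl fun w _ => by ring } with hψ
    have hgen : ∀ x, ∀ hx : x ∈ Vsp, ψ ⟨x, hx⟩ = 0 := by
      intro x hx
      induction hx using Submodule.span_induction with
      | mem x hmem' =>
        obtain ⟨idx, rfl⟩ := hmem'
        exact hlam idx
      | zero => exact map_zero ψ
      | add x y hx hy ihx ihy =>
        have : (⟨x + y, _⟩ : Vsp) = ⟨x, hx⟩ + ⟨y, hy⟩ := rfl
        rw [this, map_add, ihx, ihy, add_zero]
      | smul a x hx ihx =>
        have : (⟨a • x, _⟩ : Vsp) = a • (⟨x, hx⟩ : Vsp) := rfl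
        rw [this, map_smul, ihx, smul_zero]
    funext w'
    have h3 := hgen (bb w' : V) (bb w').2
    have h4 : (⟨(bb w' : V), (bb w').2⟩ : Vsp) = bb w' := Subtype.ext rfl
    rw [h4] at h3
    have h5 : ψ (bb w') = lam w' := by
      simp only [hψ, LinearMap.coe_mk, AddHom.coe_mk, Basis.repr_self]
      rw [Finset.sum_eq_single w' (fun q _ hq => by
        rw [Finsupp.single_apply, if_neg (Ne.symm hq), mul_zero]) (by simp)]
      rw [Finsupp.single_apply, if_pos rfl, mul_one]
    rw [h5] at h3
    exact h3

/-- The `K`-linear combination map attached to a finite family in a module. -/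
def combMap {V : Type} [AddCommGroup V] [Module K V] {m : ℕ} (vv : Fin m → V) :
    (Fin m → K) →ₗ[K] V where
  toFun := fun x => ∑ ν, x ν • vv ν
  map_add' := by intro x y; simp [add_smul, Finset.sum_add_distrib]
  map_smul' := by intro c x; simp [Finset.smul_sum, smul_smul]

lemma combMap_apply {V : Type} [AddCommGroup V] [Module K V] {m : ℕ} (vv : Fin m → V)
    (x : Fin m → K) : combMap vv x = ∑ ν, x ν • vv ν := rfl

lemma range_combMap {V : Type} [AddCommGroup V] [Module K V] {m : ℕ} (vv : Fin m → V) :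
    LinearMap.range (combMap (K := K) vv) = Submodule.span K (Set.range vv) := by
  apply le_antisymm
  · rintro y hy
    obtain ⟨x, rfl⟩ := LinearMap.mem_range.mp hy
    rw [combMap_apply]
    exact Submodule.sum_mem (Submodule.span K (Set.range vv)) fun ν _ =>
      Submodule.smul_mem _ _ (Submodule.subset_span (Set.mem_range_self ν))
  · rw [Submodule.span_le]
    rintro - ⟨ν, rfl⟩
    rw [SetLike.mem_coe]
    refine ⟨Pi.single ν 1, ?_⟩
    rw [combMap_apply]
    rw [Finset.sum_eq_single ν (fun q _ hq => by
      rw [Pi.single_eq_of_ne hq, zero_smul]) (by simp)]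
    rw [Pi.single_eq_same, one_smul]

open Module in
lemma finrank_ker_combMap {V : Type} [AddCommGroup V] [Module K V] [FiniteDimensional K V]
    {m : ℕ} (vv : Fin m → V) :
    finrank K (LinearMap.ker (combMap (K := K) vv))
      + finrank K (Submodule.span K (Set.range vv)) = m := by
  have h1 := LinearMap.finrank_range_add_finrank_ker (combMap (K := K) vv)
  rw [range_combMap] at h1
  rw [Module.finrank_pi, Fintype.card_fin] at h1
  omega

open Module in
lemma finrank_span_range_le {V : Type} [AddCommGroup V] [Module K V] [FiniteDimensional K V]
    {m : ℕ} (vv : Fin m → V) :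
    finrank K (Submodule.span K (Set.range vv)) ≤ m := by
  have := finrank_ker_combMap (K := K) vv
  omega
end Aux4

set_option maxHeartbeats 2000000 in
/-- Message recovery by interpolation in the Loidreau–Overbeck decoder.
With `h` a nonzero right-kernel vector of `L`, `T^(i)` invertible over `GF(q)` zeroing
the first `t_i` entries of `h^(i)·T^(i)`, `D^(i) := ((T^(i))⁻¹)ᵀ`, `β̃^(i) := β^(i)·D^(i)`
and `R̃^(i) := R^(i)·D^(i)`: for all `j`, `i` and `μ ≥ t_i`, the `(j,μ)`-entry of `R̃^(i)`
equals `Σ_{u<k} M_{j,u}·D_{a_i}^u(β̃^(i)_μ)`, and the `j`-th row of `M` is the unique such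
interpolating vector. -/
theorem LO_message_recovery
    {K F : Type} [Field K] [Field F] [Algebra K F] [Fintype K] [Fintype F]
    (σ : F ≃+* F)
    (hfix : ∀ x : F, σ x = x ↔ x ∈ Set.range (algebraMap K F))
    {ℓ : ℕ} (hℓ : 1 ≤ ℓ) (nn : Fin ℓ → ℕ) (aa : Fin ℓ → F)
    (ha0 : ∀ i, aa i ≠ 0)
    (haconj : ∀ i j : Fin ℓ, i ≠ j → ¬ SConj σ (aa i) (aa j))
    (β : (Σ i : Fin ℓ, Fin (nn i)) → F)
    (hβ : ∀ i, LinearIndependent K fun μ : Fin (nn i) => β ⟨i, μ⟩)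
    {s : ℕ} (hs : 1 ≤ s) {k n t : ℕ} (hn : n = ∑ i, nn i)
    (hk : 1 ≤ k) (hkn : k ≤ n)
    (M : Matrix (Fin s) (Fin k) F)
    (E R : Matrix (Fin s) (Σ i : Fin ℓ, Fin (nn i)) F)
    (hR : R = codeword σ nn aa β k M + E)
    (ht : wtM K nn E = t) (htnk : t ≤ n - k)
    (hrk : (mooreMat σ nn aa (n - t - k) E).rank = t)
    (h : (Σ i : Fin ℓ, Fin (nn i)) → F) (hh0 : h ≠ 0)
    (hker : (LOmat σ nn aa β R n t k).mulVec h = 0)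
    (T : (i : Fin ℓ) → Matrix (Fin (nn i)) (Fin (nn i)) K)
    (hT : ∀ i, IsUnit (T i))
    (hTz : ∀ (i : Fin ℓ) (μ : Fin (nn i)),
      (μ : ℕ) < rkqMat K (Matrix.of fun (r : Fin s) (ν : Fin (nn i)) => E r ⟨i, ν⟩) →
      ∑ ν : Fin (nn i), h ⟨i, ν⟩ * algebraMap K F (T i ν μ) = 0) :
    ∀ (βt : (Σ i : Fin ℓ, Fin (nn i)) → F)
      (Rt : Matrix (Fin s) (Σ i : Fin ℓ, Fin (nn i)) F),
      (∀ p : Σ i : Fin ℓ, Fin (nn i),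
        βt p = ∑ ν : Fin (nn p.1), β ⟨p.1, ν⟩ * algebraMap K F (((T p.1)⁻¹).transpose ν p.2)) →
      (∀ (j : Fin s) (p : Σ i : Fin ℓ, Fin (nn i)),
        Rt j p = ∑ ν : Fin (nn p.1), R j ⟨p.1, ν⟩ * algebraMap K F (((T p.1)⁻¹).transpose ν p.2)) →
      ∀ j : Fin s,
        (∀ (i : Fin ℓ) (μ : Fin (nn i)),
          rkqMat K (Matrix.of fun (r : Fin s) (ν : Fin (nn i)) => E r ⟨i, ν⟩) ≤ (μ : ℕ) →
          Rt j ⟨i, μ⟩ = ∑ u : Fin k, M j u * opev σ (aa i) (βt ⟨i, μ⟩) (u : ℕ)) ∧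
        ∀ v : Fin k → F,
          (∀ (i : Fin ℓ) (μ : Fin (nn i)),
            rkqMat K (Matrix.of fun (r : Fin s) (ν : Fin (nn i)) => E r ⟨i, ν⟩) ≤ (μ : ℕ) →
            ∑ u : Fin k, v u * opev σ (aa i) (βt ⟨i, μ⟩) (u : ℕ) = Rt j ⟨i, μ⟩) →
          v = M j := by
  classical
  haveI : FiniteDimensional K F := Module.Finite.of_finite
  intro βt Rt hβt hRt j
  -- notation
  let tt : Fin ℓ → ℕ := fun i =>
    rkqMat K (Matrix.of fun (r : Fin s) (ν : Fin (nn i)) => E r ⟨i, ν⟩)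
  have httdef : ∀ i : Fin ℓ,
      rkqMat K (Matrix.of fun (r : Fin s) (ν : Fin (nn i)) => E r ⟨i, ν⟩) = tt i :=
    fun i => rfl
  have htsum : ∑ i, tt i = t := ht
  have hkt : t + k ≤ n := by omega
  -- block column rank is at most the block length
  have htle : ∀ i, tt i ≤ nn i := by
    intro i
    exact finrank_span_range_le (K := K)
      (fun ν : Fin (nn i) => (fun r : Fin s => E r ⟨i, ν⟩))
  -- kernel equations from hker
  have hker1 : ∀ u : ℕ, u < n - t - 1 →
      ∑ p : Σ i : Fin ℓ, Fin (nn i), opev σ (aa p.1) (β p) u * h p = 0 := by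
    intro u hu
    have h1 := congrFun hker (Sum.inl ⟨u, hu⟩)
    simpa [Matrix.mulVec, dotProduct, LOmat] using h1
  have hker2 : ∀ (j' : Fin s) (u : ℕ), ∀ hu : u < n - t - k,
      ∑ p : Σ i : Fin ℓ, Fin (nn i), opev σ (aa p.1) (R j' p) u * h p = 0 := by
    intro j' u hu
    have h1 := congrFun hker (Sum.inr (j', ⟨u, hu⟩))
    simpa [Matrix.mulVec, dotProduct, LOmat] using h1
  have hkerE : ∀ (j' : Fin s) (u : ℕ), u < n - t - k →
      ∑ p : Σ i : Fin ℓ, Fin (nn i), opev σ (aa p.1) (E j' p) u * h p = 0 := by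
    intro j' u hu
    have h2 := hker2 j' u hu
    have hRp : ∀ p : Σ i : Fin ℓ, Fin (nn i), R j' p
        = (∑ w : Fin k, M j' w * opev σ (aa p.1) (β p) (w : ℕ)) + E j' p := by
      intro p
      rw [hR]
      simp [codeword, moore, Matrix.add_apply, Matrix.mul_apply]
    have key : ∀ p : Σ i : Fin ℓ, Fin (nn i), opev σ (aa p.1) (R j' p) u
        = (∑ w : Fin k, (⇑σ)^[u] (M j' w) * opev σ (aa p.1) (β p) (u + (w : ℕ)))
          + opev σ (aa p.1) (E j' p) u := by
      intro p
      rw [hRp p, opev_add]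
      congr 1
      rw [opev_sum]
      refine Finset.sum_congr rfl fun w _ => ?_
      rw [opev_mul_left]
      congr 1
      exact opev_opev σ (aa p.1) (β p) u (w : ℕ)
    have hsum : ∑ p : Σ i : Fin ℓ, Fin (nn i), opev σ (aa p.1) (R j' p) u * h p
        = (∑ w : Fin k, (⇑σ)^[u] (M j' w)
            * ∑ p : Σ i : Fin ℓ, Fin (nn i), opev σ (aa p.1) (β p) (u + (w : ℕ)) * h p)
          + ∑ p : Σ i : Fin ℓ, Fin (nn i), opev σ (aa p.1) (E j' p) u * h p := by
      calc ∑ p : Σ i : Fin ℓ, Fin (nn i), opev σ (aa p.1) (R j' p) u * h p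
          = ∑ p : Σ i : Fin ℓ, Fin (nn i),
            ((∑ w : Fin k, (⇑σ)^[u] (M j' w)
              * (opev σ (aa p.1) (β p) (u + (w : ℕ)) * h p))
              + opev σ (aa p.1) (E j' p) u * h p) := by
            refine Finset.sum_congr rfl fun p _ => ?_
            rw [key p, add_mul, Finset.sum_mul]
            congr 1
            exact Finset.sum_congr rfl fun w _ => by ring
        _ = _ := by
            rw [Finset.sum_add_distrib]
            congr 1
            rw [Finset.sum_comm]
            exact Finset.sum_congr rfl fun w _ => by rw [Finset.mul_sum]
    rw [hsum] at h2
    have hz : ∀ w : Fin k,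
        ∑ p : Σ i : Fin ℓ, Fin (nn i), opev σ (aa p.1) (β p) (u + (w : ℕ)) * h p = 0 := by
      intro w
      exact hker1 (u + (w : ℕ)) (by omega)
    rw [Finset.sum_congr rfl fun w _ => by rw [hz w, mul_zero]] at h2
    rw [Finset.sum_const_zero, zero_add] at h2
    exact h2
  -- decomposition of the error-matrix blocks
  have hdec : ∀ i : Fin ℓ, ∃ (B : Fin (tt i) → (Fin s → F)) (C : Fin (tt i) → Fin (nn i) → K),
      (∀ ν : Fin (nn i), (fun r : Fin s => E r ⟨i, ν⟩) = ∑ w, C w ν • B w) ∧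
      LinearIndependent K B ∧
      (∀ lam : Fin (tt i) → K, (∀ ν, ∑ w, lam w * C w ν = 0) → lam = 0) := fun i =>
    exists_decomp (K := K) (fun ν : Fin (nn i) => fun r : Fin s => E r ⟨i, ν⟩)
  choose B C hBC hBindep hCrow using hdec
  have hEdec : ∀ (r : Fin s) (i : Fin ℓ) (ν : Fin (nn i)),
      E r ⟨i, ν⟩ = ∑ w, algebraMap K F (C i w ν) * B i w r := by
    intro r i ν
    have h1 := congrFun (hBC i ν) r
    simpa [Finset.sum_apply, Pi.smul_apply, Algebra.smul_def] using h1
  set G : Matrix (Fin s × Fin (n - t - k)) (Σ i : Fin ℓ, Fin (tt i)) F :=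
    Matrix.of (fun rr q => opev σ (aa q.1) (B q.1 q.2 rr.1) ((rr.2 : ℕ))) with hG
  set Emat : Matrix (Σ i : Fin ℓ, Fin (tt i)) (Σ i : Fin ℓ, Fin (nn i)) F :=
    Matrix.of (fun q p => if hip : q.1 = p.1
      then algebraMap K F (C q.1 q.2 (Fin.cast (congrArg nn hip.symm) p.2)) else 0)
    with hEmat
  have hfact : mooreMat σ nn aa (n - t - k) E = G * Emat := by
    ext rr p
    obtain ⟨i, ν⟩ := p
    rw [Matrix.mul_apply]
    rw [← Finset.univ_sigma_univ, Finset.sum_sigma]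
    rw [Finset.sum_eq_single i (fun i' _ hne => Finset.sum_eq_zero fun w _ => by
        rw [hEmat]
        simp only [Matrix.of_apply]
        split
        · rename_i hip
          exact absurd hip hne
        · rw [mul_zero])
      (fun habs => absurd (Finset.mem_univ _) habs)]
    show opev σ (aa i) (E rr.1 ⟨i, ν⟩) ((rr.2 : ℕ)) = _
    rw [hEdec rr.1 i ν, opev_sum]
    refine Finset.sum_congr rfl fun w _ => ?_
    rw [opev_alg_mul σ hfix, hG, hEmat]
    simp only [Matrix.of_apply]
    split
    · exact mul_comm _ _
    · rename_i hip
      exact absurd trivial hip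
  have hcardJ : Fintype.card (Σ i : Fin ℓ, Fin (tt i)) = t := by
    simp [Fintype.card_sigma, htsum]
  have hGrank : G.rank = Fintype.card (Σ i : Fin ℓ, Fin (tt i)) := by
    have h1 : (G * Emat).rank ≤ G.rank := Matrix.rank_mul_le_left G Emat
    rw [← hfact, hrk] at h1
    have h2 : G.rank ≤ Fintype.card (Σ i : Fin ℓ, Fin (tt i)) := Matrix.rank_le_card_width G
    omega
  have hGinj : ∀ x : (Σ i : Fin ℓ, Fin (tt i)) → F, G.mulVec x = 0 → x = 0 := by
    intro x hx
    have h1 := LinearMap.finrank_range_add_finrank_ker (Matrix.mulVecLin G)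
    have h2 : Module.finrank F (LinearMap.range (Matrix.mulVecLin G)) = G.rank := rfl
    have h2b : Module.finrank F ((Σ i : Fin ℓ, Fin (tt i)) → F)
        = Fintype.card (Σ i : Fin ℓ, Fin (tt i)) := Module.finrank_pi F
    rw [h2, h2b, hGrank] at h1
    have h3 : Module.finrank F (LinearMap.ker (Matrix.mulVecLin G)) = 0 := by omega
    have h4 : LinearMap.ker (Matrix.mulVecLin G) = ⊥ := Submodule.finrank_eq_zero.mp h3
    have h5 : x ∈ LinearMap.ker (Matrix.mulVecLin G) := by
      rw [LinearMap.mem_ker, Matrix.mulVecLin_apply]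
      exact hx
    rw [h4, Submodule.mem_bot] at h5
    exact h5
  have hEmatvec : Emat.mulVec h = 0 := by
    have h1 : (mooreMat σ nn aa (n - t - k) E).mulVec h = 0 := by
      funext rr
      show (∑ p : Σ i : Fin ℓ, Fin (nn i),
        mooreMat σ nn aa (n - t - k) E rr p * h p) = 0
      exact hkerE rr.1 (rr.2 : ℕ) rr.2.isLt
    rw [hfact, ← Matrix.mulVec_mulVec] at h1
    exact hGinj _ h1
  have hE'h : ∀ (i : Fin ℓ) (w : Fin (tt i)),
      ∑ ν : Fin (nn i), algebraMap K F (C i w ν) * h ⟨i, ν⟩ = 0 := by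
    intro i w
    have h1 := congrFun hEmatvec ⟨i, w⟩
    have h2 : Emat.mulVec h ⟨i, w⟩
        = ∑ ν : Fin (nn i), algebraMap K F (C i w ν) * h ⟨i, ν⟩ := by
      show (∑ p : Σ i' : Fin ℓ, Fin (nn i'), Emat ⟨i, w⟩ p * h p) = _
      rw [← Finset.univ_sigma_univ, Finset.sum_sigma]
      rw [Finset.sum_eq_single i (fun i' _ hne => Finset.sum_eq_zero fun ν _ => by
          rw [hEmat]
          simp only [Matrix.of_apply]
          split
          · rename_i hip
            exact absurd hip (Ne.symm hne)
          · rw [zero_mul])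
        (fun habs => absurd (Finset.mem_univ _) habs)]
      refine Finset.sum_congr rfl fun ν _ => ?_
      rw [hEmat]
      simp only [Matrix.of_apply]
      split
      · rfl
      · rename_i hip
        exact absurd trivial hip
    rw [h2] at h1
    exact h1
  -- decomposition of the kernel-vector blocks
  let dd : Fin ℓ → ℕ := fun i =>
    Module.finrank K (Submodule.span K (Set.range fun ν : Fin (nn i) => h ⟨i, ν⟩))
  have hdec2 : ∀ i : Fin ℓ, ∃ (Bh : Fin (dd i) → F) (Ch : Fin (dd i) → Fin (nn i) → K),
      (∀ ν : Fin (nn i), h ⟨i, ν⟩ = ∑ w, Ch w ν • Bh w) ∧ LinearIndependent K Bh ∧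
      (∀ lam : Fin (dd i) → K, (∀ ν, ∑ w, lam w * Ch w ν = 0) → lam = 0) := fun i =>
    exists_decomp (K := K) (fun ν : Fin (nn i) => h ⟨i, ν⟩)
  choose Bh Ch hBhC hBhindep hChrow using hdec2
  let γ : (i : Fin ℓ) → Fin (dd i) → F := fun i w => ∑ ν, Ch i w ν • β ⟨i, ν⟩
  have hγindep : ∀ i, LinearIndependent K (γ i) := by
    intro i
    rw [Fintype.linearIndependent_iff]
    intro lam hlam
    have h1 : ∑ ν : Fin (nn i), (∑ w, lam w * Ch i w ν) • β ⟨i, ν⟩ = 0 := by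
      calc ∑ ν : Fin (nn i), (∑ w, lam w * Ch i w ν) • β ⟨i, ν⟩
          = ∑ ν : Fin (nn i), ∑ w, lam w • (Ch i w ν • β ⟨i, ν⟩) := by
            refine Finset.sum_congr rfl fun ν _ => ?_
            rw [Finset.sum_smul]
            exact Finset.sum_congr rfl fun w _ => by rw [smul_smul]
        _ = ∑ w, lam w • γ i w := by
            rw [Finset.sum_comm]
            exact Finset.sum_congr rfl fun w _ => by rw [← Finset.smul_sum]
        _ = 0 := hlam
    have h2 := Fintype.linearIndependent_iff.mp (hβ i) _ h1
    exact fun w => congrFun (hChrow i lam h2) w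
  have hwt : n - t ≤ ∑ i, dd i := by
    by_contra hlt
    push_neg at hlt
    have hkerM := mooreKer σ hfix aa ha0 haconj dd γ hγindep (n - t - 1)
      (by omega) (fun q => Bh q.1 q.2) ?van
    · apply hh0
      funext p
      have h1 := hBhC p.1 p.2
      rw [h1]
      have h2 : ∀ w : Fin (dd p.1), Bh p.1 w = 0 := fun w => congrFun hkerM ⟨p.1, w⟩
      rw [Finset.sum_congr rfl fun w _ => by rw [h2 w, smul_zero]]
      exact Finset.sum_const_zero
    case van =>
      intro u hu
      rw [← Finset.univ_sigma_univ, Finset.sum_sigma]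
      calc ∑ i, ∑ w : Fin (dd i), opev σ (aa i) (γ i w) u * Bh i w
          = ∑ i, ∑ ν : Fin (nn i), opev σ (aa i) (β ⟨i, ν⟩) u * h ⟨i, ν⟩ := by
            refine Finset.sum_congr rfl fun i _ => ?_
            calc ∑ w : Fin (dd i), opev σ (aa i) (γ i w) u * Bh i w
                = ∑ w : Fin (dd i), ∑ ν : Fin (nn i),
                    opev σ (aa i) (β ⟨i, ν⟩) u * (Ch i w ν • Bh i w) := by
                  refine Finset.sum_congr rfl fun w _ => ?_
                  rw [show γ i w = ∑ ν, Ch i w ν • β ⟨i, ν⟩ from rfl, opev_sum,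
                    Finset.sum_mul]
                  refine Finset.sum_congr rfl fun ν _ => ?_
                  rw [Algebra.smul_def, Algebra.smul_def, opev_alg_mul σ hfix]
                  ring
              _ = ∑ ν : Fin (nn i), opev σ (aa i) (β ⟨i, ν⟩) u * h ⟨i, ν⟩ := by
                  rw [Finset.sum_comm]
                  refine Finset.sum_congr rfl fun ν _ => ?_
                  rw [← Finset.mul_sum, ← hBhC i ν]
        _ = ∑ p : Σ i : Fin ℓ, Fin (nn i), opev σ (aa p.1) (β p) u * h p := by
            rw [← Finset.univ_sigma_univ, Finset.sum_sigma]
        _ = 0 := hker1 u (by omega)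
  -- dimension of the per-block kernels of h
  have hXfact : ∀ i, Module.finrank K (LinearMap.ker (combMap (K := K)
      (fun ν : Fin (nn i) => h ⟨i, ν⟩))) + dd i = nn i := fun i =>
    finrank_ker_combMap (K := K) _
  have hXge : ∀ i, tt i ≤ Module.finrank K (LinearMap.ker (combMap (K := K)
      (fun ν : Fin (nn i) => h ⟨i, ν⟩))) := by
    intro i
    have hrowker : ∀ w : Fin (tt i), (fun ν => C i w ν) ∈ LinearMap.ker (combMap (K := K)
        (fun ν : Fin (nn i) => h ⟨i, ν⟩)) := by
      intro w
      rw [LinearMap.mem_ker, combMap_apply]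
      calc ∑ ν, C i w ν • h ⟨i, ν⟩
          = ∑ ν, algebraMap K F (C i w ν) * h ⟨i, ν⟩ :=
            Finset.sum_congr rfl fun ν _ => Algebra.smul_def _ _
        _ = 0 := hE'h i w
    have hrowind : LinearIndependent K (fun w : Fin (tt i) => (fun ν => C i w ν)) := by
      rw [Fintype.linearIndependent_iff]
      intro lam hlam
      have h2 : ∀ ν, ∑ w, lam w * C i w ν = 0 := by
        intro ν
        have h3 := congrFun hlam ν
        simpa [Finset.sum_apply] using h3
      exact fun w => congrFun (hCrow i lam h2) w
    have hle : Submodule.span K (Set.range fun w : Fin (tt i) => (fun ν => C i w ν))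
        ≤ LinearMap.ker (combMap (K := K) (fun ν : Fin (nn i) => h ⟨i, ν⟩)) := by
      rw [Submodule.span_le]
      rintro - ⟨w, rfl⟩
      exact hrowker w
    calc tt i = Module.finrank K (Submodule.span K
          (Set.range fun w : Fin (tt i) => (fun ν => C i w ν))) := by
          rw [finrank_span_eq_card hrowind, Fintype.card_fin]
      _ ≤ _ := Submodule.finrank_mono hle
  have hXeq : ∀ i, Module.finrank K (LinearMap.ker (combMap (K := K)
      (fun ν : Fin (nn i) => h ⟨i, ν⟩))) = tt i := by
    have hs1 : (∑ i, Module.finrank K (LinearMap.ker (combMap (K := K)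
        (fun ν : Fin (nn i) => h ⟨i, ν⟩)))) + ∑ i, dd i = ∑ i, nn i := by
      rw [← Finset.sum_add_distrib]
      exact Finset.sum_congr rfl fun i _ => hXfact i
    intro i
    by_contra hne2
    have hlt : tt i < Module.finrank K (LinearMap.ker (combMap (K := K)
        (fun ν : Fin (nn i) => h ⟨i, ν⟩))) :=
      lt_of_le_of_ne (hXge i) (fun e => hne2 e.symm)
    have hstrict : ∑ i, tt i < ∑ i, Module.finrank K (LinearMap.ker (combMap (K := K)
        (fun ν : Fin (nn i) => h ⟨i, ν⟩))) :=
      Finset.sum_lt_sum (fun i' _ => hXge i') ⟨i, Finset.mem_univ i, hlt⟩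
    omega
  -- the first `tt i` columns of `T i` span the kernel of the `h`-functional
  have hTcolker : ∀ (i : Fin ℓ) (μ' : {μ : Fin (nn i) // (μ : ℕ) < tt i}),
      (fun ν => T i ν μ'.1) ∈ LinearMap.ker (combMap (K := K)
        (fun ν : Fin (nn i) => h ⟨i, ν⟩)) := by
    intro i μ'
    rw [LinearMap.mem_ker, combMap_apply]
    calc ∑ ν, T i ν μ'.1 • h ⟨i, ν⟩
        = ∑ ν, h ⟨i, ν⟩ * algebraMap K F (T i ν μ'.1) := by
          refine Finset.sum_congr rfl fun ν _ => ?_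
          rw [Algebra.smul_def]; ring
      _ = 0 := hTz i μ'.1 μ'.2
  have hTcolind : ∀ i : Fin ℓ, LinearIndependent K
      (fun μ' : {μ : Fin (nn i) // (μ : ℕ) < tt i} => (fun ν => T i ν μ'.1)) := by
    intro i
    rw [Fintype.linearIndependent_iff]
    intro lam hlam j0
    have hTd : (T i)⁻¹ * T i = 1 :=
      Matrix.nonsing_inv_mul (T i) ((Matrix.isUnit_iff_isUnit_det (T i)).mp (hT i))
    have h1 : ∀ ν, ∑ μ' : {μ : Fin (nn i) // (μ : ℕ) < tt i}, lam μ' * T i ν μ'.1 = 0 := by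
      intro ν
      have h2 := congrFun hlam ν
      simpa [Finset.sum_apply] using h2
    have h3 : ∑ ν, ((T i)⁻¹ j0.1 ν
        * ∑ μ' : {μ : Fin (nn i) // (μ : ℕ) < tt i}, lam μ' * T i ν μ'.1) = 0 := by
      rw [Finset.sum_congr rfl fun ν _ => by rw [h1 ν, mul_zero]]
      exact Finset.sum_const_zero
    have h4 : ∑ μ' : {μ : Fin (nn i) // (μ : ℕ) < tt i},
        lam μ' * ((T i)⁻¹ * T i) j0.1 μ'.1 = 0 := by
      calc ∑ μ' : {μ : Fin (nn i) // (μ : ℕ) < tt i}, lam μ' * ((T i)⁻¹ * T i) j0.1 μ'.1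
          = ∑ μ' : {μ : Fin (nn i) // (μ : ℕ) < tt i},
              ∑ ν, (T i)⁻¹ j0.1 ν * (lam μ' * T i ν μ'.1) := by
            refine Finset.sum_congr rfl fun μ' _ => ?_
            rw [Matrix.mul_apply, Finset.mul_sum]
            exact Finset.sum_congr rfl fun ν _ => by ring
        _ = ∑ ν, ((T i)⁻¹ j0.1 ν
              * ∑ μ' : {μ : Fin (nn i) // (μ : ℕ) < tt i}, lam μ' * T i ν μ'.1) := by
            rw [Finset.sum_comm]
            exact Finset.sum_congr rfl fun ν _ => (Finset.mul_sum _ _ _).symm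
        _ = 0 := h3
    rw [hTd] at h4
    rw [Finset.sum_eq_single j0 (fun q _ hq => by
        rw [Matrix.one_apply_ne (fun e => hq (Subtype.ext e.symm)), mul_zero])
      (fun habs => absurd (Finset.mem_univ _) habs)] at h4
    rw [Matrix.one_apply_eq, mul_one] at h4
    exact h4
  have hcardsub : ∀ i : Fin ℓ, Fintype.card {μ : Fin (nn i) // (μ : ℕ) < tt i} = tt i := by
    intro i
    have e : {μ : Fin (nn i) // (μ : ℕ) < tt i} ≃ Fin (tt i) := {
      toFun := fun μ' => ⟨μ'.1, μ'.2⟩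
      invFun := fun w => ⟨⟨w, lt_of_lt_of_le w.isLt (htle i)⟩, w.isLt⟩
      left_inv := fun μ' => Subtype.ext (Fin.ext rfl)
      right_inv := fun w => Fin.ext rfl }
    rw [Fintype.card_congr e, Fintype.card_fin]
  have hTspan : ∀ i : Fin ℓ, Submodule.span K (Set.range
      (fun μ' : {μ : Fin (nn i) // (μ : ℕ) < tt i} => (fun ν => T i ν μ'.1)))
      = LinearMap.ker (combMap (K := K) (fun ν : Fin (nn i) => h ⟨i, ν⟩)) := by
    intro i
    apply Submodule.eq_of_le_of_finrank_le
    · rw [Submodule.span_le]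
      rintro - ⟨μ', rfl⟩
      exact hTcolker i μ'
    · rw [hXeq i, finrank_span_eq_card (hTcolind i), hcardsub i]
  have hCrowspan : ∀ (i : Fin ℓ) (w : Fin (tt i)),
      ∃ α : {μ : Fin (nn i) // (μ : ℕ) < tt i} → K,
        ∀ ν, C i w ν = ∑ μ', α μ' * T i ν μ'.1 := by
    intro i w
    have hCker : (fun ν => C i w ν) ∈ LinearMap.ker (combMap (K := K)
        (fun ν : Fin (nn i) => h ⟨i, ν⟩)) := by
      rw [LinearMap.mem_ker, combMap_apply]
      calc ∑ ν, C i w ν • h ⟨i, ν⟩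
          = ∑ ν, algebraMap K F (C i w ν) * h ⟨i, ν⟩ :=
            Finset.sum_congr rfl fun ν _ => Algebra.smul_def _ _
        _ = 0 := hE'h i w
    rw [← hTspan i] at hCker
    obtain ⟨α, hα⟩ := (Submodule.mem_span_range_iff_exists_fun K).mp hCker
    refine ⟨α, fun ν => ?_⟩
    have h1 := congrFun hα ν
    simpa [Finset.sum_apply, smul_eq_mul] using h1.symm
  have hED0 : ∀ (r : Fin s) (i : Fin ℓ) (μ : Fin (nn i)), tt i ≤ (μ : ℕ) →
      ∑ ν, E r ⟨i, ν⟩ * algebraMap K F (((T i)⁻¹).transpose ν μ) = 0 := by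
    intro r i μ hμ
    have hTd : (T i)⁻¹ * T i = 1 :=
      Matrix.nonsing_inv_mul (T i) ((Matrix.isUnit_iff_isUnit_det (T i)).mp (hT i))
    calc ∑ ν, E r ⟨i, ν⟩ * algebraMap K F (((T i)⁻¹).transpose ν μ)
        = ∑ ν, ∑ w, algebraMap K F (C i w ν) * B i w r
            * algebraMap K F ((T i)⁻¹ μ ν) := by
          refine Finset.sum_congr rfl fun ν _ => ?_
          rw [hEdec r i ν, Finset.sum_mul]
          exact Finset.sum_congr rfl fun w _ => by rw [Matrix.transpose_apply]
      _ = ∑ w, B i w r * algebraMap K F (∑ ν, C i w ν * (T i)⁻¹ μ ν) := by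
          rw [Finset.sum_comm]
          refine Finset.sum_congr rfl fun w _ => ?_
          rw [map_sum, Finset.mul_sum]
          refine Finset.sum_congr rfl fun ν _ => ?_
          rw [map_mul]
          ring
      _ = 0 := by
          apply Finset.sum_eq_zero
          intro w _
          have hcoef : ∑ ν, C i w ν * (T i)⁻¹ μ ν = 0 := by
            obtain ⟨α, hα⟩ := hCrowspan i w
            calc ∑ ν, C i w ν * (T i)⁻¹ μ ν
                = ∑ μ' : {μ'' : Fin (nn i) // (μ'' : ℕ) < tt i},
                    α μ' * ((T i)⁻¹ * T i) μ μ'.1 := by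
                  rw [Finset.sum_congr rfl fun ν _ => by rw [hα ν, Finset.sum_mul]]
                  rw [Finset.sum_comm]
                  refine Finset.sum_congr rfl fun μ' _ => ?_
                  rw [Matrix.mul_apply, Finset.mul_sum]
                  exact Finset.sum_congr rfl fun ν _ => by ring
              _ = 0 := by
                  rw [hTd]
                  apply Finset.sum_eq_zero
                  intro μ' _
                  rw [Matrix.one_apply_ne (by
                    intro e
                    have h6 := congrArg Fin.val e
                    have h7 := μ'.2
                    omega), mul_zero]
          rw [hcoef, map_zero, mul_zero]
  have partA : ∀ (i : Fin ℓ) (μ : Fin (nn i)), tt i ≤ (μ : ℕ) →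
      Rt j ⟨i, μ⟩ = ∑ u : Fin k, M j u * opev σ (aa i) (βt ⟨i, μ⟩) (u : ℕ) := by
    intro i μ hμ
    rw [hRt j ⟨i, μ⟩]
    calc ∑ ν : Fin (nn i), R j ⟨i, ν⟩ * algebraMap K F (((T i)⁻¹).transpose ν μ)
        = (∑ ν : Fin (nn i), (∑ u : Fin k, M j u * opev σ (aa i) (β ⟨i, ν⟩) (u : ℕ))
            * algebraMap K F (((T i)⁻¹).transpose ν μ))
          + ∑ ν : Fin (nn i), E j ⟨i, ν⟩ * algebraMap K F (((T i)⁻¹).transpose ν μ) := by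
          rw [← Finset.sum_add_distrib]
          refine Finset.sum_congr rfl fun ν _ => ?_
          rw [hR]
          simp only [Matrix.add_apply, codeword, Matrix.mul_apply, moore, Matrix.of_apply]
          ring
      _ = ∑ ν : Fin (nn i), ∑ u : Fin k, M j u * opev σ (aa i) (β ⟨i, ν⟩) (u : ℕ)
            * algebraMap K F (((T i)⁻¹).transpose ν μ) := by
          rw [hED0 j i μ hμ, add_zero]
          exact Finset.sum_congr rfl fun ν _ => Finset.sum_mul _ _ _
      _ = ∑ u : Fin k, M j u * opev σ (aa i) (βt ⟨i, μ⟩) (u : ℕ) := by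
          rw [Finset.sum_comm]
          refine Finset.sum_congr rfl fun u _ => ?_
          rw [hβt ⟨i, μ⟩]
          have hopev : opev σ (aa i)
              (∑ ν, β ⟨i, ν⟩ * algebraMap K F (((T i)⁻¹).transpose ν μ)) ((u : ℕ))
              = ∑ ν, algebraMap K F (((T i)⁻¹).transpose ν μ)
                  * opev σ (aa i) (β ⟨i, ν⟩) ((u : ℕ)) := by
            rw [opev_sum]
            refine Finset.sum_congr rfl fun ν _ => ?_
            rw [mul_comm (β ⟨i, ν⟩), opev_alg_mul σ hfix]
          rw [hopev, Finset.mul_sum]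
          refine Finset.sum_congr rfl fun ν _ => by ring
  refine ⟨fun i μ hμ => partA i μ hμ, ?_⟩
  intro v hv
  by_contra hvne
  have hex : ∃ u0 : Fin k, v u0 - M j u0 ≠ 0 := by
    by_contra hall
    push_neg at hall
    exact hvne (funext fun u => sub_eq_zero.mp (hall u))
  obtain ⟨u0, hu0⟩ := hex
  set f : ℕ → F := fun u => if hu : u < k then v ⟨u, hu⟩ - M j ⟨u, hu⟩ else 0 with hf
  have hβtind : ∀ i, LinearIndependent K (fun μ : Fin (nn i) => βt ⟨i, μ⟩) := by
    intro i
    rw [Fintype.linearIndependent_iff]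
    intro lam hlam j0
    have h1 : ∑ ν : Fin (nn i), (∑ μ, lam μ * (T i)⁻¹ μ ν) • β ⟨i, ν⟩ = 0 := by
      calc ∑ ν : Fin (nn i), (∑ μ, lam μ * (T i)⁻¹ μ ν) • β ⟨i, ν⟩
          = ∑ ν : Fin (nn i), ∑ μ, lam μ • (β ⟨i, ν⟩
              * algebraMap K F (((T i)⁻¹).transpose ν μ)) := by
            refine Finset.sum_congr rfl fun ν _ => ?_
            rw [Finset.sum_smul]
            refine Finset.sum_congr rfl fun μ _ => ?_
            rw [Algebra.smul_def, Algebra.smul_def, map_mul]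
            show algebraMap K F (lam μ) * algebraMap K F ((T i)⁻¹ μ ν) * β ⟨i, ν⟩
              = algebraMap K F (lam μ) * (β ⟨i, ν⟩ * algebraMap K F ((T i)⁻¹ μ ν))
            ring
        _ = ∑ μ, lam μ • βt ⟨i, μ⟩ := by
            rw [Finset.sum_comm]
            refine Finset.sum_congr rfl fun μ _ => ?_
            rw [← Finset.smul_sum, ← hβt ⟨i, μ⟩]
        _ = 0 := hlam
    have h2 := Fintype.linearIndependent_iff.mp (hβ i) _ h1
    have h3 : ∑ ν, ((∑ μ, lam μ * (T i)⁻¹ μ ν) * T i ν j0) = 0 := by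
      rw [Finset.sum_congr rfl fun ν _ => by rw [h2 ν, zero_mul]]
      exact Finset.sum_const_zero
    have hTd : (T i)⁻¹ * T i = 1 :=
      Matrix.nonsing_inv_mul (T i) ((Matrix.isUnit_iff_isUnit_det (T i)).mp (hT i))
    have h4 : ∑ μ, lam μ * ((T i)⁻¹ * T i) μ j0 = 0 := by
      calc ∑ μ, lam μ * ((T i)⁻¹ * T i) μ j0
          = ∑ μ, ∑ ν, (lam μ * (T i)⁻¹ μ ν) * T i ν j0 := by
            refine Finset.sum_congr rfl fun μ _ => ?_
            rw [Matrix.mul_apply, Finset.mul_sum]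
            exact Finset.sum_congr rfl fun ν _ => by ring
        _ = ∑ ν, ((∑ μ, lam μ * (T i)⁻¹ μ ν) * T i ν j0) := by
            rw [Finset.sum_comm]
            exact Finset.sum_congr rfl fun ν _ => (Finset.sum_mul _ _ _).symm
        _ = 0 := h3
    rw [hTd] at h4
    rw [Finset.sum_eq_single j0 (fun q _ hq => by
        rw [Matrix.one_apply_ne hq, mul_zero])
      (fun habs => absurd (Finset.mem_univ _) habs)] at h4
    rw [Matrix.one_apply_eq, mul_one] at h4
    exact h4
  have hcardsub2 : ∀ i : Fin ℓ,
      Fintype.card {μ : Fin (nn i) // tt i ≤ (μ : ℕ)} = nn i - tt i := by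
    intro i
    have e : {μ : Fin (nn i) // tt i ≤ (μ : ℕ)} ≃ Fin (nn i - tt i) := {
      toFun := fun μ' => ⟨(μ'.1 : ℕ) - tt i, by
        have h5 := μ'.1.isLt
        have h6 := μ'.2
        omega⟩
      invFun := fun w => ⟨⟨(w : ℕ) + tt i, by
        have h5 := w.isLt
        omega⟩, Nat.le_add_left _ _⟩
      left_inv := fun μ' => Subtype.ext (Fin.ext (by
        have h5 := μ'.2
        show ((μ'.1 : ℕ) - tt i) + tt i = (μ'.1 : ℕ)
        omega))
      right_inv := fun w => Fin.ext (by
        show ((w : ℕ) + tt i) - tt i = (w : ℕ)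
        omega) }
    rw [Fintype.card_congr e, Fintype.card_fin]
  have hap := polyBound σ hfix aa ha0 haconj (k - 1) f
    ⟨(u0 : ℕ), by have := u0.isLt; omega, by
      simp only [hf]
      rw [dif_pos u0.isLt]
      exact hu0⟩
    (fun u hu => by simp only [hf]; rw [dif_neg (by omega)])
    (fun i => Submodule.span K (Set.range
      (fun μ' : {μ : Fin (nn i) // tt i ≤ (μ : ℕ)} => βt ⟨i, μ'.1⟩)))
    ?vanish
  · have hdim : ∀ i, Module.finrank K (Submodule.span K (Set.range
        (fun μ' : {μ : Fin (nn i) // tt i ≤ (μ : ℕ)} => βt ⟨i, μ'.1⟩))) = nn i - tt i := by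
      intro i
      have hsubind : LinearIndependent K
          (fun μ' : {μ : Fin (nn i) // tt i ≤ (μ : ℕ)} => βt ⟨i, μ'.1⟩) :=
        (hβtind i).comp (fun μ' : {μ : Fin (nn i) // tt i ≤ (μ : ℕ)} => μ'.1) Subtype.val_injective
      rw [finrank_span_eq_card hsubind, hcardsub2 i]
    rw [Finset.sum_congr rfl fun i _ => hdim i] at hap
    have hsum2 : (∑ i, (nn i - tt i)) + ∑ i, tt i = ∑ i, nn i := by
      rw [← Finset.sum_add_distrib]
      exact Finset.sum_congr rfl fun i _ => Nat.sub_add_cancel (htle i)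
    omega
  case vanish =>
    intro i b hb
    have hle : Submodule.span K (Set.range
        (fun μ' : {μ : Fin (nn i) // tt i ≤ (μ : ℕ)} => βt ⟨i, μ'.1⟩))
        ≤ evpKer σ hfix f (k - 1) (aa i) := by
      rw [Submodule.span_le]
      rintro - ⟨μ', rfl⟩
      rw [SetLike.mem_coe, mem_evpKer_iff]
      unfold evp
      rw [show k - 1 + 1 = k from by omega]
      rw [← Fin.sum_univ_eq_sum_range
        (fun u => f u * opev σ (aa i) (βt ⟨i, μ'.1⟩) u) k]
      calc ∑ u : Fin k, f (u : ℕ) * opev σ (aa i) (βt ⟨i, μ'.1⟩) ((u : ℕ))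
          = ∑ u : Fin k, (v u - M j u) * opev σ (aa i) (βt ⟨i, μ'.1⟩) ((u : ℕ)) := by
            refine Finset.sum_congr rfl fun u _ => ?_
            simp only [hf]
            rw [dif_pos u.isLt]
        _ = (∑ u : Fin k, v u * opev σ (aa i) (βt ⟨i, μ'.1⟩) ((u : ℕ)))
            - ∑ u : Fin k, M j u * opev σ (aa i) (βt ⟨i, μ'.1⟩) ((u : ℕ)) := by
            rw [← Finset.sum_sub_distrib]
            exact Finset.sum_congr rfl fun u _ => by ring
        _ = 0 := by
            rw [hv i μ'.1 μ'.2, ← partA i μ'.1 μ'.2, sub_self]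
    exact hle hb

end Stmt19
end
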